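/- There exist a ∈ (0,1) and a function f analytic on 𝔻, namely f(z) = ∫₀^z (ζ − a)/(1 − aζ) dζ with Taylor coefficients a_1 = −a and a_n = (1 − a²) a^{n−2}/n for n ≥ 2, such that f(0) = 0, sup_{z∈𝔻} |f′(z)| ≤ 1, and ∑_{n≥1} |a_n| rⁿ = a r + ((1 − a²)/a²)(−log(1 − a r) − a r) > 1 for r = 0.883678. (Hence the Bohr radius of the pair (differentiation, identity) is at most 0.883678.) -/

import Mathlib

open Metric Filter

/-- The Taylor coefficients of `f(z) = ∫₀ᶻ (ζ - a)/(1 - aζ) dζ`: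
`a₁ = -a` and `aₙ = (1 - a²)aⁿ⁻²/n` for `n ≥ 2`. -/
noncomputable def extremalCoeff (a : ℝ) : ℕ → ℂ := fun n =>
  if n = 0 then 0
  else if n = 1 then (-(a : ℂ))
  else ((1 - (a : ℂ) ^ 2) * (a : ℂ) ^ (n - 2) / (n : ℂ))

lemma extremal_coeff2 (n : ℕ) : extremalCoeff (13/16) (n+2)
    = (1 - ((13/16:ℝ) : ℂ)^2) * ((13/16:ℝ):ℂ)^n / ((n:ℂ)+2) := by
  simp [extremalCoeff]

lemma extremal_coeff2' (n : ℕ) : extremalCoeff (13/16) (n+2)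
    = (((87:ℝ)/256 * (13/16)^n / (n+2) : ℝ) : ℂ) := by
  rw [extremal_coeff2]; push_cast; norm_num

lemma extremal_coeffnorm2 (n : ℕ) : ‖extremalCoeff (13/16) (n+2)‖
    = (87:ℝ)/256 * (13/16)^n / (n+2) := by
  rw [extremal_coeff2', Complex.norm_real, Real.norm_eq_abs, abs_of_nonneg (by positivity)]

lemma extremal_coeff_norm_le (n : ℕ) : ‖extremalCoeff (13/16) n‖ ≤ 1 := by
  match n with
  | 0 => simp [extremalCoeff]
  | 1 => simp [extremalCoeff]; norm_num
  | (m+2) =>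
    rw [extremal_coeffnorm2]
    have h1 : (87:ℝ)/256 * (13/16)^m ≤ 1 := by
      nlinarith [pow_le_one₀ (by norm_num : (0:ℝ) ≤ 13/16) (by norm_num : (13:ℝ)/16 ≤ 1) (n := m)]
    have h2 : (0:ℝ) ≤ (m:ℝ) := Nat.cast_nonneg m
    rw [div_le_one (by positivity)]
    linarith

lemma extremal_summable {z : ℂ} (hz : ‖z‖ < 1) :
    Summable (fun n : ℕ => extremalCoeff (13/16) n * z ^ n) := by
  refine Summable.of_norm_bounded (summable_geometric_of_lt_one (norm_nonneg z) hz) fun n => ?_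
  rw [norm_mul, norm_pow]
  calc ‖extremalCoeff (13/16) n‖ * ‖z‖^n ≤ 1 * ‖z‖^n := by
        gcongr
        exact extremal_coeff_norm_le n
    _ = ‖z‖^n := one_mul _

lemma extremal_hne {z : ℂ} (hz : ‖z‖ < 1) : (1 : ℂ) - ((13/16:ℝ):ℂ) * z ≠ 0 := by
  have haz : ‖((13/16:ℝ):ℂ) * z‖ < 1 := by
    rw [norm_mul, Complex.norm_real, Real.norm_eq_abs]
    rw [abs_of_pos (by norm_num)]
    nlinarith [norm_nonneg z]
  intro h
  rw [sub_eq_zero] at h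
  have : ‖((13/16:ℝ):ℂ) * z‖ = 1 := by rw [← h]; simp
  linarith [this ▸ haz]

lemma extremal_hasDeriv {z : ℂ} (hz : ‖z‖ < 1) :
    HasDerivAt (fun y => ∑' n : ℕ, extremalCoeff (13/16) n * y ^ n)
      ((z - ((13/16:ℝ):ℂ)) / (1 - ((13/16:ℝ):ℂ) * z)) z := by
  set a : ℝ := 13/16 with ha
  set ρ : ℝ := (‖z‖ + 1)/2 with hρ
  have hρ0 : 0 < ρ := by positivity
  have hρhalf : 1/2 ≤ ρ := by rw [hρ]; have := norm_nonneg z; linarith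
  have hρ1 : ρ < 1 := by rw [hρ]; linarith
  have hzρ : ‖z‖ < ρ := by rw [hρ]; linarith
  have key : HasDerivAt (fun y => ∑' n : ℕ, extremalCoeff a n * y ^ n)
      (∑' n : ℕ, extremalCoeff a n * ((n : ℂ) * z ^ (n-1))) z := by
    apply hasDerivAt_tsum_of_isPreconnected
      (u := fun n : ℕ => 2 * ((n : ℝ) * ρ ^ n))
      (t := Metric.ball (0:ℂ) ρ)
      (g := fun n y => extremalCoeff a n * y ^ n)
      (g' := fun n y => extremalCoeff a n * ((n : ℂ) * y ^ (n-1)))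
      ?_ isOpen_ball (convex_ball _ _).isPreconnected
      ?_ ?_ (Metric.mem_ball_self hρ0) ?_ (by simpa [Metric.mem_ball, dist_eq_norm] using hzρ)
    · have : Summable (fun n : ℕ => (n:ℝ) * ρ ^ n) := by
        simpa using summable_pow_mul_geometric_of_norm_lt_one 1
          (by rwa [Real.norm_eq_abs, abs_of_pos hρ0] : ‖ρ‖ < 1)
      exact this.mul_left 2
    · intro n y _
      exact (hasDerivAt_pow n y).const_mul (extremalCoeff a n)
    · intro n y hy
      rw [Metric.mem_ball, dist_zero_right] at hy
      rw [norm_mul, norm_mul, norm_pow, Complex.norm_natCast]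
      have hb : ‖y‖ ^ (n-1) ≤ ρ ^ (n-1) := pow_le_pow_left₀ (norm_nonneg y) hy.le _
      have h2 : ρ ^ (n-1) ≤ 2 * ρ ^ n := by
        match n with
        | 0 => simpa using by nlinarith
        | (m+1) =>
          simp only [Nat.add_sub_cancel, pow_succ]
          nlinarith [pow_pos hρ0 m, pow_nonneg hρ0.le m]
      calc ‖extremalCoeff a n‖ * ((n:ℝ) * ‖y‖^(n-1))
          ≤ 1 * ((n:ℝ) * ρ^(n-1)) := by
            gcongr
            exact extremal_coeff_norm_le n
        _ = (n:ℝ) * ρ^(n-1) := one_mul _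
        _ ≤ (n:ℝ) * (2 * ρ^n) := by gcongr
        _ = 2 * ((n:ℝ) * ρ^n) := by ring
    · exact extremal_summable (by norm_num)
  have haz : ‖((a:ℝ):ℂ) * z‖ < 1 := by
    rw [norm_mul, Complex.norm_real, Real.norm_eq_abs, ha]
    rw [abs_of_pos (by norm_num)]
    nlinarith [norm_nonneg z]
  have hne : (1 : ℂ) - (a:ℂ) * z ≠ 0 := by
    intro h
    rw [sub_eq_zero] at h
    have : ‖((a:ℝ):ℂ) * z‖ = 1 := by rw [← h]; simp
    linarith [this ▸ haz]
  have hsum : HasSum (fun n : ℕ => extremalCoeff a n * ((n : ℂ) * z ^ (n-1)))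
      ((z - (a:ℂ)) / (1 - (a:ℂ) * z)) := by
    have geom : HasSum (fun n : ℕ => (((a:ℂ) * z))^n) (1 - (a:ℂ)*z)⁻¹ :=
      hasSum_geometric_of_norm_lt_one haz
    have h2 : HasSum (fun n : ℕ => extremalCoeff a (n+2) * (((n:ℂ)+2) * z ^ (n+1)))
        ((1 - (a:ℂ)^2) * z * (1 - (a:ℂ)*z)⁻¹) := by
      have := geom.mul_left ((1 - (a:ℂ)^2) * z)
      refine this.congr_fun fun n => ?_
      rw [extremal_coeff2]
      have hn : ((n:ℂ)+2) ≠ 0 := by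
        exact_mod_cast (Nat.cast_ne_zero (R := ℂ)).mpr (Nat.succ_ne_zero (n+1))
      have hcast : ((13/16:ℝ):ℂ) = 13/16 := by norm_num
      rw [hcast]
      field_simp
      ring
    have h2' : HasSum (fun n : ℕ => extremalCoeff a (n+2) * (((n+2:ℕ):ℂ) * z ^ ((n+2)-1)))
        ((1-(a:ℂ)^2)*z*(1-(a:ℂ)*z)⁻¹) := by
      convert h2 using 2 with n
      push_cast
      norm_num
    have h3 : HasSum (fun n : ℕ => extremalCoeff a n * ((n:ℂ) * z^(n-1)))
        ((1-(a:ℂ)^2)*z*(1-(a:ℂ)*z)⁻¹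
          + ∑ i ∈ Finset.range 2, extremalCoeff a i * ((i:ℂ) * z^(i-1))) :=
      (hasSum_nat_add_iff 2).mp h2'
    convert h3 using 1
    rw [Finset.sum_range_succ, Finset.sum_range_one]
    simp only [Nat.cast_zero, Nat.cast_one, zero_mul, mul_zero, one_mul, pow_zero,
      mul_one, add_zero, zero_add]
    have e1 : extremalCoeff a 1 = -(a:ℂ) := by simp [extremalCoeff]
    rw [e1]
    have hX : (1 - (a:ℂ)*z)⁻¹ * (1 - (a:ℂ)*z) = 1 := inv_mul_cancel₀ hne
    rw [div_eq_iff hne]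
    linear_combination (-(1-(a:ℂ)^2)*z) * hX
  rw [hsum.tsum_eq] at key
  exact key

lemma extremal_normbd {z : ℂ} (hz : ‖z‖ < 1) (hne : (1:ℂ) - ((13/16:ℝ):ℂ) * z ≠ 0) :
    ‖(z - ((13/16:ℝ):ℂ)) / (1 - ((13/16:ℝ):ℂ) * z)‖ ≤ 1 := by
  have hz' : ‖z‖ < 1 := hz
  have hny : Complex.normSq z < 1 := by
    rw [← Complex.sq_norm]
    nlinarith [norm_nonneg z]
  have h1 : Complex.normSq (z - ((13/16:ℝ):ℂ)) ≤ Complex.normSq (1 - ((13/16:ℝ):ℂ) * z) := by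
    simp only [Complex.normSq_apply, Complex.sub_re, Complex.sub_im, Complex.mul_re,
      Complex.mul_im, Complex.one_re, Complex.one_im, Complex.ofReal_re,
      Complex.ofReal_im] at *
    nlinarith [sq_nonneg z.re, sq_nonneg z.im]
  rw [norm_div, div_le_one (norm_pos_iff.mpr hne)]
  rw [Complex.norm_def, Complex.norm_def]
  exact Real.sqrt_le_sqrt h1

lemma extremal_hx : |(13/16 : ℝ) * 0.883678| < 1 := by
  rw [abs_of_pos (by norm_num)]; norm_num

lemma extremal_logsum : HasSum (fun n : ℕ => ((13/16:ℝ) * 0.883678)^(n+1)/((n:ℝ)+1))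
    (-Real.log (1 - (13/16:ℝ) * 0.883678)) := by
  have := Real.hasSum_pow_div_log_of_abs_lt_one extremal_hx
  convert this using 2 with n

lemma extremal_logsum2 : HasSum (fun n : ℕ => ((13/16:ℝ) * 0.883678)^(n+2)/((n:ℝ)+2))
    (-Real.log (1 - (13/16:ℝ) * 0.883678) - (13/16:ℝ) * 0.883678) := by
  have h1 : HasSum (fun n : ℕ =>
      ((13/16:ℝ) * 0.883678)^((n+1)+1)/(((n+1:ℕ):ℝ)+1))
      (-Real.log (1 - (13/16:ℝ) * 0.883678) - (13/16:ℝ) * 0.883678) := by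
    rw [hasSum_nat_add_iff (f := fun n : ℕ => ((13/16:ℝ) * 0.883678)^(n+1)/((n:ℝ)+1)) 1]
    convert extremal_logsum using 1
    · rfl
    rw [Finset.sum_range_one]
    norm_num
  convert h1 using 2 with n
  push_cast
  ring

lemma extremal_keySum : HasSum (fun n : ℕ => ‖extremalCoeff (13/16) (n+2)‖ * (0.883678:ℝ)^(n+2))
    (((1-(13/16:ℝ)^2)/(13/16:ℝ)^2) *
      (-Real.log (1 - (13/16:ℝ) * 0.883678) - (13/16:ℝ) * 0.883678)) := by
  have := extremal_logsum2.mul_left ((1-(13/16:ℝ)^2)/(13/16:ℝ)^2)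
  refine this.congr_fun fun n => ?_
  rw [extremal_coeffnorm2, mul_pow, pow_add]
  ring

lemma extremal_fullSum : HasSum (fun n : ℕ => ‖extremalCoeff (13/16) n‖ * (0.883678:ℝ)^n)
    ((13/16:ℝ) * 0.883678
      + ((1-(13/16:ℝ)^2)/(13/16:ℝ)^2) *
        (-Real.log (1 - (13/16:ℝ) * 0.883678) - (13/16:ℝ) * 0.883678)) := by
  have h := (hasSum_nat_add_iff
    (f := fun n : ℕ => ‖extremalCoeff (13/16) n‖ * (0.883678:ℝ)^n) 2).mp extremal_keySum
  convert h using 1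
  · rfl
  rw [Finset.sum_range_succ, Finset.sum_range_one]
  have e0 : ‖extremalCoeff (13/16) 0‖ = 0 := by simp [extremalCoeff]
  have e1 : ‖extremalCoeff (13/16) 1‖ = (13/16:ℝ) := by
    simp [extremalCoeff]
  rw [e0, e1]
  ring

lemma extremal_finalIneq : 1 < (13/16:ℝ) * 0.883678
      + ((1-(13/16:ℝ)^2)/(13/16:ℝ)^2) *
        (-Real.log (1 - (13/16:ℝ) * 0.883678) - (13/16:ℝ) * 0.883678) := by
  have hlb : ∑ i ∈ Finset.range 40, ((13/16:ℝ) * 0.883678)^(i+1)/((i:ℝ)+1)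
      ≤ -Real.log (1 - (13/16:ℝ) * 0.883678) :=
    sum_le_hasSum _ (fun i _ => by positivity) extremal_logsum
  have hQ : (7911293/6250000 : ℝ)
      ≤ ∑ i ∈ Finset.range 40, ((13/16:ℝ) * 0.883678)^(i+1)/((i:ℝ)+1) := by
    norm_num [Finset.sum_range_succ]
  have hcoe : ((1-(13/16:ℝ)^2)/(13/16:ℝ)^2) = 87/169 := by norm_num
  rw [hcoe]
  have hlog := hQ.trans hlb
  nlinarith [hlog]

theorem bohr_radius_derivative_identity_upper_bound :
    ∃ a : ℝ, 0 < a ∧ a < 1 ∧ ∃ f : ℂ → ℂ,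
      (∀ z ∈ Metric.ball (0 : ℂ) 1,
        HasSum (fun n : ℕ => extremalCoeff a n * z ^ n) (f z)) ∧
      f 0 = 0 ∧
      (∀ z ∈ Metric.ball (0 : ℂ) 1, ‖deriv f z‖ ≤ 1) ∧
      (∑' n : ℕ, ‖extremalCoeff a n‖ * (0.883678 : ℝ) ^ n
        = a * 0.883678
          + ((1 - a ^ 2) / a ^ 2) * (-Real.log (1 - a * 0.883678) - a * 0.883678)) ∧
      1 < ∑' n : ℕ, ‖extremalCoeff a n‖ * (0.883678 : ℝ) ^ n := by
  refine ⟨13/16, by norm_num, by norm_num,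
    fun z => ∑' n : ℕ, extremalCoeff (13/16) n * z ^ n, ?_, ?_, ?_, ?_, ?_⟩
  · intro z hz
    rw [Metric.mem_ball, dist_zero_right] at hz
    exact (extremal_summable hz).hasSum
  · show (∑' n : ℕ, extremalCoeff (13/16) n * (0:ℂ) ^ n) = 0
    have h : ∀ n : ℕ, extremalCoeff (13/16) n * (0:ℂ)^n = 0 := by
      intro n
      match n with
      | 0 => simp [extremalCoeff]
      | (m+1) => simp
    calc (∑' n : ℕ, extremalCoeff (13/16) n * (0:ℂ) ^ n) = ∑' _ : ℕ, (0:ℂ) := tsum_congr h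
      _ = 0 := tsum_zero
  · intro z hz
    rw [Metric.mem_ball, dist_zero_right] at hz
    rw [(extremal_hasDeriv hz).deriv]
    exact extremal_normbd hz (extremal_hne hz)
  · exact extremal_fullSum.tsum_eq
  · rw [extremal_fullSum.tsum_eq]
    exact extremal_finalIneq
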